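/- Let γ ∈ ℕ with γ ≥ 2 and n ∈ ℕ with n ≥ 2. Then (∑_{k=0}^{n-1} (2k+1))^γ ≥ 4^{γ-1} + ∑_{k=1}^{n-1} (2k+1)^γ. -/

import Mathlib

theorem pascal_sum_ineq (γ n : ℕ) (hγ : 2 ≤ γ) (hn : 2 ≤ n) :
    4 ^ (γ - 1) + ∑ k ∈ Finset.Icc 1 (n - 1), (2 * k + 1) ^ γ ≤
      (∑ k ∈ Finset.range n, (2 * k + 1)) ^ γ := by
  induction n, hn using Nat.le_induction with
  | base =>
    simp [Finset.sum_range_succ]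
    obtain ⟨m, rfl⟩ := Nat.exists_eq_add_of_le hγ
    have h34 : (3:ℕ) ^ m ≤ 4 ^ m := Nat.pow_le_pow_left (by norm_num) m
    have e1 : 2 + m - 1 = m + 1 := by omega
    rw [e1, show 2 + m = m + 2 from by omega]
    ring_nf
    nlinarith [pow_pos (show 0 < 4 by norm_num) m]
  | succ n hn ih =>
    rw [Finset.sum_range_succ]
    have hn1 : n - 1 + 1 = n := by omega
    rw [show n + 1 - 1 = n from rfl, ← hn1, Finset.sum_Icc_succ_top (by omega), hn1]
    have key := pow_add_pow_le (x := ∑ k ∈ Finset.range n, (2 * k + 1))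
      (y := 2 * n + 1) (n := γ) (by omega)
    omega
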